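/- Let m ≤ k be positive integers, a_1,…,a_n ∈ ℝ^m, and x ∈ ℝ_{≥0}^n with Σ_{i∈[n]} x_i = k. Then the multinomial expectation identity holds: Σ_{c : [n] → ℕ, Σ_i c_i = k} (k!/∏_{i∈[n]} c_i!) · ∏_{i∈[n]} (x_i/k)^{c_i} · det(Σ_{i∈[n]} c_i a_i a_iᵀ) = (k! / ((k−m)! · k^m)) · det(Σ_{i∈[n]} x_i a_i a_iᵀ). In other words, if a multiset 𝒮 of k indices is sampled i.i.d. with Pr{pick i} = x_i/k, then E[det(Σ_{i∈𝒮} a_i a_iᵀ)] = (k!/((k−m)! k^m)) · det(Σ_{i∈[n]} x_i a_i a_iᵀ). -/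

import Mathlib

open Matrix Finset

private lemma multinomial_cast {n k : ℕ} {c : Fin n → ℕ} (hc : ∑ i, c i = k) :
    (Nat.multinomial Finset.univ c : ℝ) = (k.factorial : ℝ) / ∏ i, ((c i).factorial : ℝ) := by
  have hspec := Nat.multinomial_spec Finset.univ c
  rw [hc] at hspec
  have hne : (∏ i, ((c i).factorial : ℝ)) ≠ 0 := by
    refine Finset.prod_ne_zero_iff.2 fun i _ => ?_
    exact_mod_cast (Nat.factorial_pos _).ne'
  rw [eq_div_iff hne]
  have : ((∏ i, ((c i).factorial) : ℕ) : ℝ) * (Nat.multinomial Finset.univ c : ℝ)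
      = (k.factorial : ℝ) := by exact_mod_cast congrArg (Nat.cast : ℕ → ℝ) hspec
  push_cast at this
  linarith [this]

private lemma moment_base {n : ℕ} (p : Fin n → ℝ) (hp : ∑ i, p i = 1) (k : ℕ) :
    ∑ c ∈ Finset.Nat.antidiagonalTuple n k,
      ((k.factorial : ℝ) / ∏ i, ((c i).factorial : ℝ)) * ∏ i, p i ^ c i = 1 := by
  have hAT : Finset.Nat.antidiagonalTuple n k = Finset.piAntidiag Finset.univ k := by
    ext c; simp [Finset.Nat.mem_antidiagonalTuple]
  have hthm := Finset.sum_pow_eq_sum_piAntidiag (Finset.univ : Finset (Fin n)) p k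
  rw [hp, one_pow] at hthm
  rw [hAT]
  calc ∑ c ∈ Finset.piAntidiag Finset.univ k,
        ((k.factorial : ℝ) / ∏ i, ((c i).factorial : ℝ)) * ∏ i, p i ^ c i
      = ∑ c ∈ Finset.piAntidiag Finset.univ k,
        (Nat.multinomial Finset.univ c : ℝ) * ∏ i, p i ^ c i := by
        refine Finset.sum_congr rfl fun c hc => ?_
        rw [Finset.mem_piAntidiag] at hc
        rw [multinomial_cast hc.1]
    _ = 1 := hthm.symm

private lemma moment {n : ℕ} (p : Fin n → ℝ) (hp : ∑ i, p i = 1) (S : Finset (Fin n)) :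
    ∀ k : ℕ, S.card ≤ k →
    ∑ c ∈ Finset.Nat.antidiagonalTuple n k,
      ((k.factorial : ℝ) / ∏ i, ((c i).factorial : ℝ)) * (∏ i, p i ^ c i)
        * (∏ i ∈ S, (c i : ℝ))
    = ((k.factorial : ℝ) / ((k - S.card).factorial : ℝ)) * ∏ i ∈ S, p i := by
  induction S using Finset.induction_on with
  | empty =>
    intro k _
    simp only [Finset.prod_empty, mul_one, Finset.card_empty, Nat.sub_zero]
    rw [moment_base p hp k, div_self (by exact_mod_cast k.factorial_pos.ne')]
  | @insert s S hs ih =>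
    intro k hk
    rw [Finset.card_insert_of_notMem hs] at hk ⊢
    obtain ⟨k', rfl⟩ : ∃ k', k = k' + 1 := ⟨k - 1, by omega⟩
    have hk' : S.card ≤ k' := by omega
    rw [← Finset.sum_filter_add_sum_filter_not (Finset.Nat.antidiagonalTuple n (k' + 1))
      (fun c => c s = 0)]
    have h0 : ∑ c ∈ (Finset.Nat.antidiagonalTuple n (k' + 1)).filter (fun c => c s = 0),
        (((k' + 1).factorial : ℝ) / ∏ i, ((c i).factorial : ℝ)) * (∏ i, p i ^ c i)
          * (∏ i ∈ insert s S, (c i : ℝ)) = 0 := by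
      refine Finset.sum_eq_zero fun c hc => ?_
      rw [Finset.mem_filter] at hc
      have : ∏ i ∈ insert s S, (c i : ℝ) = 0 :=
        Finset.prod_eq_zero (Finset.mem_insert_self s S) (by rw [hc.2]; norm_num)
      rw [this, mul_zero]
    rw [h0, zero_add]
    have hbij : ∑ c ∈ (Finset.Nat.antidiagonalTuple n (k' + 1)).filter (fun c => ¬ c s = 0),
        (((k' + 1).factorial : ℝ) / ∏ i, ((c i).factorial : ℝ)) * (∏ i, p i ^ c i)
          * (∏ i ∈ insert s S, (c i : ℝ))
        = ∑ c' ∈ Finset.Nat.antidiagonalTuple n k',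
          (((k' : ℝ) + 1) * p s) *
            (((k'.factorial : ℝ) / ∏ i, ((c' i).factorial : ℝ)) * (∏ i, p i ^ c' i)
              * (∏ i ∈ S, (c' i : ℝ))) := by
      refine Finset.sum_nbij' (fun c => fun i => if i = s then c i - 1 else c i)
        (fun c' => fun i => if i = s then c' i + 1 else c' i) ?_ ?_ ?_ ?_ ?_
      · intro c hc
        rw [Finset.mem_filter, Finset.Nat.mem_antidiagonalTuple] at hc
        rw [Finset.Nat.mem_antidiagonalTuple]
        have hs1 : c s + (Finset.univ.erase s).sum c = k' + 1 := by
          rw [Finset.add_sum_erase _ c (Finset.mem_univ s)]; exact hc.1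
        rw [← Finset.add_sum_erase _ _ (Finset.mem_univ s), if_pos rfl,
          Finset.sum_congr rfl (fun i hi => if_neg (Finset.ne_of_mem_erase hi))]
        omega
      · intro c' hc'
        rw [Finset.Nat.mem_antidiagonalTuple] at hc'
        rw [Finset.mem_filter, Finset.Nat.mem_antidiagonalTuple]
        have hs1 : c' s + (Finset.univ.erase s).sum c' = k' := by
          rw [Finset.add_sum_erase _ c' (Finset.mem_univ s)]; exact hc'
        constructor
        · rw [← Finset.add_sum_erase _ _ (Finset.mem_univ s), if_pos rfl,
            Finset.sum_congr rfl (fun i hi => if_neg (Finset.ne_of_mem_erase hi))]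
          omega
        · simp
      · intro c hc
        rw [Finset.mem_filter] at hc
        funext i
        simp only
        by_cases hi : i = s
        · subst hi
          rw [if_pos rfl, if_pos rfl]
          omega
        · simp [hi]
      · intro c' _
        funext i
        simp only
        by_cases hi : i = s
        · subst hi; simp
        · simp [hi]
      · intro c hc
        rw [Finset.mem_filter, Finset.Nat.mem_antidiagonalTuple] at hc
        obtain ⟨hsum, hcs⟩ := hc
        set c' : Fin n → ℕ := fun i => if i = s then c i - 1 else c i with hc'
        show (((k' + 1).factorial : ℝ) / ∏ i, ((c i).factorial : ℝ)) * (∏ i, p i ^ c i)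
            * (∏ i ∈ insert s S, (c i : ℝ))
          = (((k' : ℝ) + 1) * p s) *
              (((k'.factorial : ℝ) / ∏ i, ((c' i).factorial : ℝ)) * (∏ i, p i ^ c' i)
                * (∏ i ∈ S, (c' i : ℝ)))
        have hcs' : c s = c' s + 1 := by simp only [hc', if_pos rfl]; omega
        have hcne : ∀ i ≠ s, c i = c' i := fun i hi => by simp [hc', hi]
        have hfac : ∏ i, ((c i).factorial : ℝ)
            = ((c' s : ℝ) + 1) * ∏ i, ((c' i).factorial : ℝ) := by
          have he : ∏ i ∈ Finset.univ.erase s, ((c i).factorial : ℝ)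
              = ∏ i ∈ Finset.univ.erase s, ((c' i).factorial : ℝ) :=
            Finset.prod_congr rfl fun i hi => by rw [hcne i (Finset.ne_of_mem_erase hi)]
          calc ∏ i, ((c i).factorial : ℝ)
              = ((c s).factorial : ℝ) * ∏ i ∈ Finset.univ.erase s, ((c i).factorial : ℝ) :=
              (Finset.mul_prod_erase Finset.univ (fun i => ((c i).factorial : ℝ)) (Finset.mem_univ s)).symm
            _ = ((c' s + 1).factorial : ℝ)
                * ∏ i ∈ Finset.univ.erase s, ((c' i).factorial : ℝ) := by rw [hcs', he]
            _ = ((c' s : ℝ) + 1) * (((c' s).factorial : ℝ)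
                * ∏ i ∈ Finset.univ.erase s, ((c' i).factorial : ℝ)) := by
                rw [Nat.factorial_succ]; push_cast; ring
            _ = ((c' s : ℝ) + 1) * ∏ i, ((c' i).factorial : ℝ) := by
                rw [Finset.mul_prod_erase Finset.univ
                  (fun i => ((c' i).factorial : ℝ)) (Finset.mem_univ s)]
        have hpow : ∏ i, p i ^ c i = p s * ∏ i, p i ^ c' i := by
          have he : ∏ i ∈ Finset.univ.erase s, p i ^ c i
              = ∏ i ∈ Finset.univ.erase s, p i ^ c' i :=
            Finset.prod_congr rfl fun i hi => by rw [hcne i (Finset.ne_of_mem_erase hi)]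
          calc ∏ i, p i ^ c i
              = p s ^ c s * ∏ i ∈ Finset.univ.erase s, p i ^ c i :=
              (Finset.mul_prod_erase Finset.univ (fun i => p i ^ c i) (Finset.mem_univ s)).symm
            _ = p s ^ (c' s + 1) * ∏ i ∈ Finset.univ.erase s, p i ^ c' i := by rw [hcs', he]
            _ = p s * (p s ^ c' s * ∏ i ∈ Finset.univ.erase s, p i ^ c' i) := by
                rw [pow_succ]; ring
            _ = p s * ∏ i, p i ^ c' i := by
                rw [Finset.mul_prod_erase Finset.univ (fun i => p i ^ c' i)
                  (Finset.mem_univ s)]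
        have hprodS : ∏ i ∈ insert s S, (c i : ℝ)
            = ((c' s : ℝ) + 1) * ∏ i ∈ S, (c' i : ℝ) := by
          rw [Finset.prod_insert hs, hcs']
          have he : ∏ i ∈ S, (c i : ℝ) = ∏ i ∈ S, (c' i : ℝ) :=
            Finset.prod_congr rfl fun i hi => by
              rw [hcne i (fun h => hs (h ▸ hi))]
          rw [he]; push_cast; ring
        have h1 : ((c' s : ℝ) + 1) ≠ 0 := by positivity
        have h2 : (∏ i, ((c' i).factorial : ℝ)) ≠ 0 := by
          refine Finset.prod_ne_zero_iff.2 fun i _ => ?_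
          exact_mod_cast (Nat.factorial_pos _).ne'
        rw [hfac, hpow, hprodS, Nat.factorial_succ]
        push_cast
        field_simp
    rw [hbij, ← Finset.mul_sum, ih k' hk', Finset.prod_insert hs, Nat.factorial_succ]
    have hsub : k' + 1 - (S.card + 1) = k' - S.card := by omega
    rw [hsub]
    push_cast
    ring

private lemma det_expand {m n : ℕ} (a : Fin n → Fin m → ℝ) (t : Fin n → ℝ) :
    (∑ i, t i • vecMulVec (a i) (a i)).det
      = ∑ f : Fin m → Fin n, (∏ j, t (f j)) *
          ((∏ j, a (f j) j) * (Matrix.of fun j => a (f j)).det) := by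
  classical
  have hM : (∑ i, t i • vecMulVec (a i) (a i))
      = (fun j => ∑ i, (t i * a i j) • a i : Matrix (Fin m) (Fin m) ℝ) := by
    funext j j'
    simp only [Matrix.sum_apply, Finset.sum_apply, Matrix.smul_apply, vecMulVec_apply,
      Pi.smul_apply, smul_eq_mul]
    exact Finset.sum_congr rfl fun i _ => by ring
  let D := (Matrix.detRowAlternating : (Fin m → ℝ) [⋀^Fin m]→ₗ[ℝ] ℝ).toMultilinearMap
  calc (∑ i, t i • vecMulVec (a i) (a i)).det
      = D (fun j => ∑ i, (t i * a i j) • a i) := by rw [hM]; rfl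
    _ = ∑ f : Fin m → Fin n, D (fun j => (t (f j) * a (f j) j) • a (f j)) :=
      D.map_sum (fun j i => (t i * a i j) • a i)
    _ = ∑ f : Fin m → Fin n, (∏ j, t (f j)) *
          ((∏ j, a (f j) j) * (Matrix.of fun j => a (f j)).det) := by
      refine Finset.sum_congr rfl fun f _ => ?_
      rw [D.map_smul_univ (fun j => t (f j) * a (f j) j) (fun j => a (f j))]
      have : D (fun j => a (f j)) = (Matrix.of fun j => a (f j)).det := rfl
      rw [this, smul_eq_mul, Finset.prod_mul_distrib]
      ring

/-- Multinomial expectation identity: sampling `k` indices i.i.d. with probabilities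
`x_i/k` yields `E[det(∑_{i∈𝒮} a_i a_iᵀ)] = (k!/((k-m)! k^m)) det(∑_i x_i a_i a_iᵀ)`. -/
theorem stmt10 (m k n : ℕ) (hm : 1 ≤ m) (hmk : m ≤ k)
    (a : Fin n → Fin m → ℝ) (x : Fin n → ℝ)
    (hx : ∀ i, 0 ≤ x i) (hxs : ∑ i, x i = (k : ℝ)) :
    ∑ c ∈ Finset.Nat.antidiagonalTuple n k,
        ((k.factorial : ℝ) / ∏ i, ((c i).factorial : ℝ))
          * (∏ i, (x i / (k : ℝ)) ^ (c i))
          * (∑ i, (c i : ℝ) • vecMulVec (a i) (a i)).det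
      = ((k.factorial : ℝ) / (((k - m).factorial : ℝ) * (k : ℝ) ^ m))
          * (∑ i, x i • vecMulVec (a i) (a i)).det := by
  classical
  have hk0 : (k : ℝ) ≠ 0 := by
    have : k ≠ 0 := by omega
    exact_mod_cast this
  have hp : ∑ i, x i / (k : ℝ) = 1 := by
    rw [← Finset.sum_div, hxs, div_self hk0]
  rw [det_expand a x, Finset.mul_sum]
  calc ∑ c ∈ Finset.Nat.antidiagonalTuple n k,
        ((k.factorial : ℝ) / ∏ i, ((c i).factorial : ℝ))
          * (∏ i, (x i / (k : ℝ)) ^ (c i))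
          * (∑ i, (c i : ℝ) • vecMulVec (a i) (a i)).det
      = ∑ c ∈ Finset.Nat.antidiagonalTuple n k, ∑ f : Fin m → Fin n,
          ((k.factorial : ℝ) / ∏ i, ((c i).factorial : ℝ))
            * (∏ i, (x i / (k : ℝ)) ^ (c i))
            * ((∏ j, (c (f j) : ℝ)) *
              ((∏ j, a (f j) j) * (Matrix.of fun j => a (f j)).det)) := by
        refine Finset.sum_congr rfl fun c _ => ?_
        rw [det_expand a (fun i => (c i : ℝ)), Finset.mul_sum]
    _ = ∑ f : Fin m → Fin n, ∑ c ∈ Finset.Nat.antidiagonalTuple n k,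
          ((k.factorial : ℝ) / ∏ i, ((c i).factorial : ℝ))
            * (∏ i, (x i / (k : ℝ)) ^ (c i))
            * ((∏ j, (c (f j) : ℝ)) *
              ((∏ j, a (f j) j) * (Matrix.of fun j => a (f j)).det)) :=
      Finset.sum_comm
    _ = ∑ f : Fin m → Fin n,
          (k.factorial : ℝ) / (((k - m).factorial : ℝ) * (k : ℝ) ^ m)
            * ((∏ j, x (f j)) *
              ((∏ j, a (f j) j) * (Matrix.of fun j => a (f j)).det)) := by
      refine Finset.sum_congr rfl fun f _ => ?_
      by_cases hf : Function.Injective f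
      · -- injective case
        set S := Finset.image f Finset.univ with hS
        have hScard : S.card = m := by
          rw [hS, Finset.card_image_of_injective _ hf, Finset.card_univ, Fintype.card_fin]
        have hmom := moment (fun i => x i / (k : ℝ)) hp S k (by rw [hScard]; exact hmk)
        have himg : ∀ g : Fin n → ℝ, ∏ i ∈ S, g i = ∏ j, g (f j) := fun g => by
          rw [hS, Finset.prod_image (fun a _ b _ h => hf h)]
        have hsum : ∑ c ∈ Finset.Nat.antidiagonalTuple n k,
            ((k.factorial : ℝ) / ∏ i, ((c i).factorial : ℝ))
              * (∏ i, (x i / (k : ℝ)) ^ (c i)) * (∏ j, (c (f j) : ℝ))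
            = ((k.factorial : ℝ) / ((k - S.card).factorial : ℝ)) * ∏ j, x (f j) / (k : ℝ) := by
          rw [← himg (fun i => x i / (k : ℝ)), ← hmom]
          exact Finset.sum_congr rfl fun c _ => by
            rw [himg (fun i => (c i : ℝ))]
        calc ∑ c ∈ Finset.Nat.antidiagonalTuple n k,
              ((k.factorial : ℝ) / ∏ i, ((c i).factorial : ℝ))
                * (∏ i, (x i / (k : ℝ)) ^ (c i))
                * ((∏ j, (c (f j) : ℝ)) *
                  ((∏ j, a (f j) j) * (Matrix.of fun j => a (f j)).det))
            = (∑ c ∈ Finset.Nat.antidiagonalTuple n k,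
                ((k.factorial : ℝ) / ∏ i, ((c i).factorial : ℝ))
                  * (∏ i, (x i / (k : ℝ)) ^ (c i)) * (∏ j, (c (f j) : ℝ)))
                * ((∏ j, a (f j) j) * (Matrix.of fun j => a (f j)).det) := by
              rw [Finset.sum_mul]
              exact Finset.sum_congr rfl fun c _ => by ring
          _ = _ := by
              rw [hsum, hScard]
              have hdiv : ∏ j : Fin m, x (f j) / (k : ℝ)
                  = (∏ j, x (f j)) / (k : ℝ) ^ m := by
                rw [Finset.prod_div_distrib, Finset.prod_const, Finset.card_univ,
                  Fintype.card_fin]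
              rw [hdiv]
              have hkm : ((k : ℝ)) ^ m ≠ 0 := pow_ne_zero _ hk0
              have hfac : (((k - m).factorial : ℝ)) ≠ 0 := by
                exact_mod_cast (Nat.factorial_pos _).ne'
              field_simp
      · -- non-injective case
        obtain ⟨j1, j2, hfj, hne⟩ := Function.not_injective_iff.1 hf
        have hdet0 : (Matrix.of fun j => a (f j)).det = 0 :=
          Matrix.det_zero_of_row_eq hne (by
            show a (f j1) = a (f j2); rw [hfj])
        simp [hdet0]
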